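/- Let D be a sequence of potentially conflicting quadruples over a set of templates P admitting multi-tree bijectivity. If two variables X and Y occurring in the templates of D are connected in D, then X implies Y in D and Y implies X in D. Furthermore, if additionally type(X) = type(Y), then μ̄(X) = μ̄(Y) for every variable mapping μ̄ for D that is admissible for some database. -/

import Mathlib

/-- A relational schema: relation names and function names with a domain and a range.
Its schema graph is the directed multigraph with nodes the relation names and an edge
labelled `f` from `dom f` to `rng f` for every function name `f`. -/
structure Schema where
  Rel : Type
  Func : Type
  dom : Func → Rel
  rng : Func → Rel

/-- Directed paths in the schema graph: `IsPath S R F T` holds if `F` is the sequence of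
edge labels of a directed path from node `R` to node `T`. -/
inductive IsPath (S : Schema) : S.Rel → List S.Func → S.Rel → Prop
  | nil (R : S.Rel) : IsPath S R [] R
  | cons {R T : S.Rel} {f : S.Func} {F : List S.Func} :
      S.dom f = R → IsPath S (S.rng f) F T → IsPath S R (f :: F) T

/-- The schema graph restricted to the edges in `H` is a multi-tree: there is at most one
directed path (using only edges in `H`) between any two nodes. -/
def MultiTreeOn (S : Schema) (H : Set S.Func) : Prop :=
  ∀ (R T : S.Rel) (F F' : List S.Func),
    IsPath S R F T → IsPath S R F' T →
    (∀ f ∈ F, f ∈ H) → (∀ f ∈ F', f ∈ H) → F = F'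

/-- A disjoint partitioning of the function names into pairs `(f, pair f)` with inverse
domains and ranges, given as a fixed-point free involution. -/
structure Pairing (S : Schema) where
  pair : S.Func → S.Func
  pair_invol : ∀ f, pair (pair f) = f
  pair_ne : ∀ f, pair f ≠ f
  dom_pair : ∀ f, S.dom (pair f) = S.rng f
  rng_pair : ∀ f, S.rng (pair f) = S.dom f

/-- Every choice of one function name from each pair yields a multi-tree. -/
def Pairing.MultiTreeCond {S : Schema} (pr : Pairing S) : Prop :=
  ∀ H : Set S.Func, (∀ f, f ∈ H ↔ pr.pair f ∉ H) → MultiTreeOn S H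

/-- A transaction template: a sequence of operations over typed variables (with read and
write sets of attributes), together with equality constraints `X = f(Y)` (represented as
the triple `(X, f, Y) ∈ eqC`) and disequality constraints `X ≠ Y` ( `(X, Y) ∈ neqC` ). -/
structure Template (S : Schema) (Var Attr : Type) where
  varType : Var → S.Rel
  ops : List (Var × Finset Attr × Finset Attr)
  eqC : Set (Var × S.Func × Var)
  neqC : Set (Var × Var)
  eq_typed : ∀ c ∈ eqC, varType c.1 = S.rng c.2.1 ∧ varType c.2.2 = S.dom c.2.1
  neq_typed : ∀ c ∈ neqC, varType c.1 = varType c.2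

/-- Intra-template variable implication: `X ⇒^F_τ Y`, generated by `X ⇒^ε_τ X` and, for a
constraint `Y = f(Z)` of the template, `X ⇒^{F}_τ Z → X ⇒^{F·f}_τ Y`. -/
inductive Template.Implies {S : Schema} {Var Attr : Type}
    (τ : Template S Var Attr) : Var → List S.Func → Var → Prop
  | refl (X : Var) : Implies τ X [] X
  | step {X Z Y : Var} {F : List S.Func} {f : S.Func} :
      Implies τ X F Z → (Y, f, Z) ∈ τ.eqC → Implies τ X (F ++ [f]) Y

/-- The constraints of a template are closed under the inverse pairs:
`Y = f(X)` is a constraint iff `X = (pair f)(Y)` is. -/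
def Template.ClosedUnderPairing {S : Schema} {Var Attr : Type}
    (τ : Template S Var Attr) (pr : Pairing S) : Prop :=
  ∀ (X Y : Var) (f : S.Func), (Y, f, X) ∈ τ.eqC ↔ (X, pr.pair f, Y) ∈ τ.eqC

/-- Operations `o` of `τi` and `p` of `τj` are potentially conflicting: they are over
variables of the same type and their attribute sets intersect appropriately
(ww, wr, or rw). -/
def PotConf {S : Schema} {Var Attr : Type} [DecidableEq Attr]
    (τi τj : Template S Var Attr) (o p : Var × Finset Attr × Finset Attr) : Prop :=
  τi.varType o.1 = τj.varType p.1 ∧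
  ((o.2.2 ∩ p.2.2).Nonempty ∨ (o.2.2 ∩ p.2.1).Nonempty ∨ (o.2.1 ∩ p.2.2).Nonempty)

/-- A sequence of potentially conflicting quadruples `(τ_i, o_i, p_j, τ_j)` over an
indexed family of (variable-disjoint copies of) templates: a quadruple `(i, k, l, j)`
relates the `k`-th operation of `tmpl i` to the `l`-th operation of `tmpl j`, which must
be potentially conflicting. -/
structure PCSeq (S : Schema) (Var Attr : Type) [DecidableEq Attr] where
  m : ℕ
  tmpl : Fin m → Template S Var Attr
  quads : List (Fin m × ℕ × ℕ × Fin m)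
  wf : ∀ q ∈ quads, ∃ o p, (tmpl q.1).ops[q.2.1]? = some o ∧
      (tmpl q.2.2.2).ops[q.2.2.1]? = some p ∧ PotConf (tmpl q.1) (tmpl q.2.2.2) o p

namespace PCSeq

variable {S : Schema} {Var Attr : Type} [DecidableEq Attr]

/-- Cross-template variable implication `X ⇒^F_D Y` (variables are tagged with the index
of the template of `D` in which they occur). -/
inductive ImpliesD (D : PCSeq S Var Attr) :
    (Fin D.m × Var) → List S.Func → (Fin D.m × Var) → Prop
  | intra {i : Fin D.m} {X Y : Var} {F : List S.Func} :
      (D.tmpl i).Implies X F Y → ImpliesD D (i, X) F (i, Y)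
  | cross {q} {o p : Var × Finset Attr × Finset Attr} : q ∈ D.quads →
      (D.tmpl q.1).ops[q.2.1]? = some o →
      (D.tmpl q.2.2.2).ops[q.2.2.1]? = some p →
      ImpliesD D (q.1, o.1) [] (q.2.2.2, p.1)
  | cross' {q} {o p : Var × Finset Attr × Finset Attr} : q ∈ D.quads →
      (D.tmpl q.1).ops[q.2.1]? = some o →
      (D.tmpl q.2.2.2).ops[q.2.2.1]? = some p →
      ImpliesD D (q.2.2.2, p.1) [] (q.1, o.1)
  | trans {x z y F₁ F₂} :
      ImpliesD D x F₁ z → ImpliesD D z F₂ y → ImpliesD D x (F₁ ++ F₂) y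

/-- Connectedness of variables in `D`: `X ≈_D Y`. -/
inductive ConnD (D : PCSeq S Var Attr) : (Fin D.m × Var) → (Fin D.m × Var) → Prop
  | base {x y} : (∃ F, D.ImpliesD x F y) ∨ (∃ F, D.ImpliesD y F x) → ConnD D x y
  | ext {x z y} : ConnD D x z →
      (∃ F, D.ImpliesD z F y) ∨ (∃ F, D.ImpliesD y F z) → ConnD D x y

/-- `D` is over a set of templates admitting multi-tree bijectivity. -/
def MTB (D : PCSeq S Var Attr) (pr : Pairing S) : Prop :=
  pr.MultiTreeCond ∧ ∀ i, (D.tmpl i).ClosedUnderPairing pr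

/-- The type of a (tagged) variable occurrence. -/
def vt (D : PCSeq S Var Attr) (x : Fin D.m × Var) : S.Rel := (D.tmpl x.1).varType x.2

end PCSeq

/-- A database over a schema: typed tuples and an interpretation of the function names. -/
structure DB (S : Schema) (Tuple : Type) where
  typeOf : Tuple → S.Rel
  interp : S.Func → Tuple → Tuple
  interp_typed : ∀ f t, typeOf (interp f t) = S.rng f

/-- A variable assignment is admissible for a database when it is type preserving and
satisfies all equality and disequality constraints of the template. -/
def Template.Admissible {S : Schema} {Var Attr Tuple : Type}
    (τ : Template S Var Attr) (d : DB S Tuple) (μ : Var → Tuple) : Prop :=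
  (∀ X : Var, d.typeOf (μ X) = τ.varType X) ∧
  (∀ c ∈ τ.eqC, μ c.1 = d.interp c.2.1 (μ c.2.2)) ∧
  (∀ c ∈ τ.neqC, μ c.1 ≠ μ c.2)

/-- A variable mapping `μ̄` for a sequence of potentially conflicting quadruples `D`
(one variable assignment per template of `D`) is admissible for a database if every
assignment is admissible for its template and the variables of the operations of each
potentially conflicting quadruple are identified. -/
def PCSeq.AdmissibleMap {S : Schema} {Var Attr Tuple : Type} [DecidableEq Attr]
    (D : PCSeq S Var Attr) (d : DB S Tuple) (μ : Fin D.m → Var → Tuple) : Prop :=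
  (∀ i, (D.tmpl i).Admissible d (μ i)) ∧
  (∀ q ∈ D.quads, ∀ o p : Var × Finset Attr × Finset Attr,
    (D.tmpl q.1).ops[q.2.1]? = some o →
    (D.tmpl q.2.2.2).ops[q.2.2.1]? = some p →
    μ q.1 o.1 = μ q.2.2.2 p.1)

set_option linter.unusedSectionVars false

section Aux

variable {S : Schema} {Var Attr Tuple : Type} [DecidableEq Attr]

/-- Transitivity of intra-template implication. -/
lemma Template.Implies.comp {τ : Template S Var Attr} {X Y Z : Var} {F G : List S.Func}
    (h1 : τ.Implies X F Y) (h2 : τ.Implies Y G Z) : τ.Implies X (F ++ G) Z := by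
  induction h2 with
  | refl => simpa using h1
  | step _ hc ih => rw [← List.append_assoc]; exact .step ih hc

/-- Reversal of intra-template implication under closure under pairing. -/
lemma Template.Implies.rev {τ : Template S Var Attr} {pr : Pairing S}
    (hcl : τ.ClosedUnderPairing pr) {X Y : Var} {F : List S.Func}
    (h : τ.Implies X F Y) : τ.Implies Y ((F.map pr.pair).reverse) X := by
  induction h with
  | refl => exact .refl _
  | @step Z Y F f _ hc ih =>
    have h1 : τ.Implies Y ([] ++ [pr.pair f]) Z := .step (.refl Y) ((hcl Z Y f).mp hc)
    simpa using h1.comp ih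

/-- Symmetry of cross-template implication under multi-tree bijectivity. -/
lemma PCSeq.ImpliesD.symmD {D : PCSeq S Var Attr} {pr : Pairing S}
    (h : D.MTB pr) {x y : Fin D.m × Var} {F : List S.Func}
    (him : D.ImpliesD x F y) : ∃ G, D.ImpliesD y G x := by
  induction him with
  | @intra i _ _ _ h' => exact ⟨_, .intra (h'.rev (h.2 i))⟩
  | cross hq ho hp => exact ⟨_, .cross' hq ho hp⟩
  | cross' hq ho hp => exact ⟨_, .cross hq ho hp⟩
  | trans _ _ ih1 ih2 =>
    obtain ⟨G1, g1⟩ := ih1; obtain ⟨G2, g2⟩ := ih2; exact ⟨_, .trans g2 g1⟩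

lemma conn_both {D : PCSeq S Var Attr} {pr : Pairing S} (h : D.MTB pr)
    {x y : Fin D.m × Var} (hc : D.ConnD x y) :
    (∃ F, D.ImpliesD x F y) ∧ (∃ F, D.ImpliesD y F x) := by
  induction hc with
  | base h' =>
    rcases h' with ⟨F, hF⟩ | ⟨F, hF⟩
    · exact ⟨⟨F, hF⟩, hF.symmD h⟩
    · exact ⟨hF.symmD h, ⟨F, hF⟩⟩
  | ext _ h' ih =>
    obtain ⟨⟨F1, h1⟩, ⟨F2, h2⟩⟩ := ih
    rcases h' with ⟨F, hF⟩ | ⟨F, hF⟩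
    · obtain ⟨G, hG⟩ := hF.symmD h
      exact ⟨⟨_, h1.trans hF⟩, ⟨_, PCSeq.ImpliesD.trans hG h2⟩⟩
    · obtain ⟨G, hG⟩ := hF.symmD h
      exact ⟨⟨_, h1.trans hG⟩, ⟨_, PCSeq.ImpliesD.trans hF h2⟩⟩

end Aux

/-- A walk of tuples in a database along function names, where each step is forward and
backward consistent with the interpretation. -/
inductive Walk {S : Schema} {Tuple : Type} (pr : Pairing S) (d : DB S Tuple) :
    Tuple → List S.Func → Tuple → Prop
  | nil (t : Tuple) : Walk pr d t [] t
  | cons {t u s : Tuple} {f : S.Func} {F : List S.Func} :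
      d.typeOf t = S.dom f → u = d.interp f t → t = d.interp (pr.pair f) u →
      Walk pr d u F s → Walk pr d t (f :: F) s

section WalkLemmas

variable {S : Schema} {Var Attr Tuple : Type} [DecidableEq Attr]
variable {pr : Pairing S} {d : DB S Tuple}

lemma walk_trans {t u s : Tuple} {F G : List S.Func}
    (h1 : Walk pr d t F u) (h2 : Walk pr d u G s) : Walk pr d t (F ++ G) s := by
  induction h1 with
  | nil => simpa using h2
  | cons a b c _ ih => exact .cons a b c (ih h2)

lemma walk_split {t s : Tuple} {F G : List S.Func}
    (h : Walk pr d t (F ++ G) s) : ∃ u, Walk pr d t F u ∧ Walk pr d u G s := by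
  induction F generalizing t with
  | nil => exact ⟨t, .nil t, by simpa using h⟩
  | cons f F ih =>
    cases h with
    | cons a b c w =>
      obtain ⟨u, w1, w2⟩ := ih w
      exact ⟨u, .cons a b c w1, w2⟩

lemma walk_isPath {t s : Tuple} {F : List S.Func}
    (h : Walk pr d t F s) : IsPath S (d.typeOf t) F (d.typeOf s) := by
  induction h with
  | nil => exact .nil _
  | @cons t u s f F a b c _ ih =>
    have hu : d.typeOf u = S.rng f := b ▸ d.interp_typed f t
    rw [hu] at ih
    exact .cons a.symm ih

lemma exists_H (pr : Pairing S) (F : List S.Func) (hF : ∀ f ∈ F, pr.pair f ∉ F) :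
    ∃ H : Set S.Func, (∀ f, f ∈ H ↔ pr.pair f ∉ H) ∧ ∀ f ∈ F, f ∈ H := by
  classical
  let r : S.Func → S.Func → Prop := fun g h => h = g ∨ h = pr.pair g
  have hrs : ∀ g h, r g h → r h g := by
    rintro g h (rfl | rfl)
    · exact Or.inl rfl
    · exact Or.inr (pr.pair_invol g).symm
  have hrt : ∀ g h k, r g h → r h k → r g k := by
    rintro g h k (rfl | rfl) (rfl | rfl)
    · exact Or.inl rfl
    · exact Or.inr rfl
    · exact Or.inr rfl
    · exact Or.inl (pr.pair_invol g)
  let st : Setoid S.Func := ⟨r, fun g => Or.inl rfl, fun h => hrs _ _ h,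
    fun h1 h2 => hrt _ _ _ h1 h2⟩
  let P : S.Func → Prop := fun g => (Quotient.mk st g).out = g
  have hmk : ∀ g, Quotient.mk st g = Quotient.mk st (pr.pair g) := fun g =>
    Quotient.sound (Or.inr rfl)
  have hout : ∀ g, P g ∨ P (pr.pair g) := by
    intro g
    have hx := @Quotient.mk_out _ st g
    rcases hx with h | h
    · exact Or.inl h.symm
    · right
      have hpg : pr.pair g = (Quotient.mk st g).out := by
        conv_lhs => rw [h]
        rw [pr.pair_invol]
      show (Quotient.mk st (pr.pair g)).out = pr.pair g
      rw [← hmk g]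
      exact hpg.symm
  have hnot : ∀ g, ¬ (P g ∧ P (pr.pair g)) := by
    rintro g ⟨h1, h2⟩
    have h1' : (Quotient.mk st g).out = g := h1
    have h2' : (Quotient.mk st (pr.pair g)).out = pr.pair g := h2
    refine pr.pair_ne g ?_
    rw [← h2', ← hmk g]
    exact h1'
  refine ⟨{g | g ∈ F ∨ (pr.pair g ∉ F ∧ P g)}, ?_, fun f hf => Or.inl hf⟩
  intro g
  constructor
  · rintro (hg | ⟨hpg, hP⟩)
    · rintro (hpg | ⟨hg', hP⟩)
      · exact hF g hg hpg
      · rw [pr.pair_invol] at hg'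
        exact hg' hg
    · rintro (hpg' | ⟨_, hP'⟩)
      · exact hpg hpg'
      · exact hnot g ⟨hP, hP'⟩
  · intro hng
    by_cases hg : g ∈ F
    · exact Or.inl hg
    · right
      refine ⟨fun hpg => hng (Or.inl hpg), ?_⟩
      rcases hout g with h | h
      · exact h
      · exact absurd (Or.inr ⟨by rwa [pr.pair_invol], h⟩) hng

lemma decomp (pr : Pairing S) {F : List S.Func} {f : S.Func}
    (h1 : f ∈ F) (h2 : pr.pair f ∈ F) :
    ∃ g A B C, F = A ++ g :: (B ++ pr.pair g :: C) := by
  classical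
  obtain ⟨A, T, rfl⟩ := List.append_of_mem h1
  have hne : pr.pair f ≠ f := pr.pair_ne f
  rcases List.mem_append.mp h2 with hA | hT
  · obtain ⟨A', C', rfl⟩ := List.append_of_mem hA
    refine ⟨pr.pair f, A', C', T, ?_⟩
    rw [pr.pair_invol]; simp
  · rcases List.mem_cons.mp hT with he | hT'
    · exact absurd he hne
    · obtain ⟨B, C, rfl⟩ := List.append_of_mem hT'
      exact ⟨f, A, B, C, rfl⟩

lemma walk_eq (hMT : pr.MultiTreeCond) :
    ∀ (n : ℕ) (F : List S.Func) (t s : Tuple), F.length ≤ n → Walk pr d t F s →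
      d.typeOf t = d.typeOf s → t = s := by
  intro n
  induction n using Nat.strong_induction_on with
  | _ n ih =>
  intro F t s hl hw hty
  by_cases hp : ∃ f ∈ F, pr.pair f ∈ F
  · obtain ⟨f, h1, h2⟩ := hp
    obtain ⟨g, A, B, C, rfl⟩ := decomp pr h1 h2
    obtain ⟨t1, wA, wRest⟩ := walk_split hw
    cases wRest with
    | @cons _ t2 _ _ _ hty1 he1 he2 wRest2 =>
      obtain ⟨s1, wB, wRest3⟩ := walk_split wRest2
      cases wRest3 with
      | @cons _ s2 _ _ _ hty2 he3 he4 wC =>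
        have hlen : A.length + B.length + C.length + 2 ≤ n := by
          simpa [List.length_append, Nat.add_assoc, Nat.add_comm, Nat.add_left_comm]
            using hl
        have htyB : d.typeOf t2 = d.typeOf s1 := by
          rw [he1, d.interp_typed, hty2, pr.dom_pair]
        have hBn : B.length < n := by omega
        have heq1 : t2 = s1 := ih B.length hBn B t2 s1 le_rfl wB htyB
        have heq2 : s2 = t1 := by rw [he3, ← heq1, ← he2]
        have wAC : Walk pr d t (A ++ C) s := walk_trans wA (heq2 ▸ wC)
        have hACn : (A ++ C).length < n := by simp [List.length_append]; omega
        exact ih (A ++ C).length hACn (A ++ C) t s le_rfl wAC hty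
  · push_neg at hp
    obtain ⟨H, hH, hFH⟩ := exists_H pr F hp
    have p1 := walk_isPath hw
    rw [hty] at p1
    have hnil : F = [] :=
      hMT H hH (d.typeOf s) (d.typeOf s) F [] p1 (.nil _) hFH (by simp)
    subst hnil
    cases hw
    rfl

lemma template_walk {τ : Template S Var Attr} (hcl : τ.ClosedUnderPairing pr)
    {μ : Var → Tuple} (ha : τ.Admissible d μ) {X Y : Var} {F : List S.Func}
    (h : τ.Implies X F Y) : Walk pr d (μ X) F (μ Y) := by
  induction h with
  | refl => exact .nil _
  | @step Z Y F f _ hc ih =>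
    refine walk_trans ih (Walk.cons ?_ ?_ ?_ (.nil _))
    · rw [ha.1 Z]; exact (τ.eq_typed _ hc).2
    · exact ha.2.1 _ hc
    · exact ha.2.1 _ ((hcl Z Y f).mp hc)

lemma impliesD_walk {D : PCSeq S Var Attr} (h : D.MTB pr)
    {μ : Fin D.m → Var → Tuple} (hμ : D.AdmissibleMap d μ)
    {x y : Fin D.m × Var} {F : List S.Func} (him : D.ImpliesD x F y) :
    Walk pr d (μ x.1 x.2) F (μ y.1 y.2) := by
  induction him with
  | @intra i _ _ _ h' => exact template_walk (h.2 i) (hμ.1 i) h'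
  | cross hq ho hp => rw [hμ.2 _ hq _ _ ho hp]; exact .nil _
  | cross' hq ho hp => rw [← hμ.2 _ hq _ _ ho hp]; exact .nil _
  | trans _ _ ih1 ih2 => exact walk_trans ih1 ih2

end WalkLemmas


/-- Over templates admitting multi-tree bijectivity, connected variables
mutually imply each other; moreover connected variables of the same type are mapped to
the same tuple by every admissible variable mapping. -/
theorem connD_implies_and_eq_of_admissible
    {S : Schema} {Var Attr : Type} [DecidableEq Attr]
    (D : PCSeq S Var Attr) (pr : Pairing S) (h : D.MTB pr)
    (x y : Fin D.m × Var) (hconn : D.ConnD x y) :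
    ((∃ F, D.ImpliesD x F y) ∧ (∃ F, D.ImpliesD y F x)) ∧
    (D.vt x = D.vt y →
      ∀ (Tuple : Type) (d : DB S Tuple) (μ : Fin D.m → Var → Tuple),
        D.AdmissibleMap d μ → μ x.1 x.2 = μ y.1 y.2) := by
  have hmain := conn_both h hconn
  refine ⟨hmain, ?_⟩
  intro hty Tuple d μ hμ
  obtain ⟨F, hF⟩ := hmain.1
  have hw := impliesD_walk h hμ hF
  refine walk_eq h.1 F.length F _ _ le_rfl hw ?_
  rw [(hμ.1 x.1).1 x.2, (hμ.1 y.1).1 y.2]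
  exact hty

-- #print axioms connD_implies_and_eq_of_admissible
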